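/- Density evolution identity for the check node update, negative values: let X₁, …, Xₙ be independent and identically distributed integer-valued random variables and let m ≤ -1 be an integer. Then the probability that the min-sum check node output (∏_{i=1}^n sign(X_i)) · min_{i} |X_i| is at most m equals Σ_{k odd, 0 ≤ k ≤ n} C(n, k) · P(X₁ ≤ m)^k · P(X₁ ≥ -m)^{n-k}. -/

import Mathlib

open MeasureTheory ProbabilityTheory ENNReal

lemma de_key {n : ℕ} (hn : 0 < n) (x : Fin n → ℤ) (m : ℤ) (hm : m ≤ -1) :
    ((∏ i, Int.sign (x i)) *
        Finset.univ.inf' ⟨⟨0, hn⟩, Finset.mem_univ _⟩ (fun i => |x i|) ≤ m)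
      ↔ ∃ A : Finset (Fin n), Odd A.card ∧ (∀ i ∈ A, x i ≤ m) ∧ (∀ i ∉ A, -m ≤ x i) := by
  set M := Finset.univ.inf' ⟨⟨0, hn⟩, Finset.mem_univ _⟩ (fun i => |x i|) with hM
  have hM0 : 0 ≤ M := Finset.le_inf' _ _ (fun i _ => abs_nonneg _)
  constructor
  · intro h
    have hne : ∀ i, x i ≠ 0 := by
      intro j hj
      have : (∏ i, Int.sign (x i)) = 0 :=
        Finset.prod_eq_zero (Finset.mem_univ j) (by simp [hj])
      rw [this, zero_mul] at h
      omega
    have hsq : (∏ i, Int.sign (x i)) * (∏ i, Int.sign (x i)) = 1 := by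
      rw [← Finset.prod_mul_distrib]
      apply Finset.prod_eq_one
      intro i _
      have := hne i
      rcases Int.lt_or_lt_of_ne this with h' | h'
      · rw [Int.sign_eq_neg_one_of_neg h']; ring
      · rw [Int.sign_eq_one_of_pos h']; ring
    have hPone : (∏ i, Int.sign (x i)) = 1 ∨ (∏ i, Int.sign (x i)) = -1 :=
      Int.isUnit_iff.1 (IsUnit.of_mul_eq_one _ hsq)
    have hPm : (∏ i, Int.sign (x i)) = -1 := by
      rcases hPone with h' | h'
      · exfalso; rw [h', one_mul] at h; omega
      · exact h'
    have hMm : -m ≤ M := by rw [hPm] at h; omega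
    have habs : ∀ i, -m ≤ |x i| := by
      intro i
      exact le_trans hMm (by rw [hM]; exact Finset.inf'_le _ (Finset.mem_univ i))
    set A := Finset.univ.filter (fun i => x i ≤ m) with hA
    have hP : (∏ i, Int.sign (x i)) = (-1) ^ A.card := by
      rw [← Finset.prod_filter_mul_prod_filter_not Finset.univ (fun i => x i ≤ m)]
      have h1 : ∀ i ∈ Finset.univ.filter (fun i => x i ≤ m), Int.sign (x i) = -1 := by
        intro i hi
        simp only [Finset.mem_filter] at hi
        exact Int.sign_eq_neg_one_of_neg (by omega)
      have h2 : ∀ i ∈ Finset.univ.filter (fun i => ¬ x i ≤ m), Int.sign (x i) = 1 := by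
        intro i hi
        simp only [Finset.mem_filter] at hi
        have := habs i
        exact Int.sign_eq_one_of_pos (by rcases abs_cases (x i) with ⟨e, _⟩ | ⟨e, _⟩ <;> omega)
      rw [Finset.prod_congr rfl h1, Finset.prod_congr rfl h2, Finset.prod_const,
        Finset.prod_const, one_pow, mul_one, hA]
    refine ⟨A, ?_, ?_, ?_⟩
    · rcases Nat.even_or_odd A.card with he | ho
      · exfalso; rw [hPm, he.neg_one_pow] at hP; omega
      · exact ho
    · intro i hi; simpa [hA] using hi
    · intro i hi
      simp only [hA, Finset.mem_filter, Finset.mem_univ, true_and, not_le] at hi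
      have := habs i
      rcases abs_cases (x i) with ⟨h1, _⟩ | ⟨h1, _⟩ <;> omega
  · rintro ⟨A, hodd, h1, h2⟩
    have hP : (∏ i, Int.sign (x i)) = -1 := by
      rw [← Finset.prod_filter_mul_prod_filter_not Finset.univ (· ∈ A)]
      have e1 : ∀ i ∈ Finset.univ.filter (· ∈ A), Int.sign (x i) = -1 := by
        intro i hi
        simp only [Finset.mem_filter] at hi
        exact Int.sign_eq_neg_one_of_neg (by have := h1 i hi.2; omega)
      have e2 : ∀ i ∈ Finset.univ.filter (· ∉ A), Int.sign (x i) = 1 := by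
        intro i hi
        simp only [Finset.mem_filter] at hi
        exact Int.sign_eq_one_of_pos (by have := h2 i hi.2; omega)
      rw [Finset.prod_congr rfl e1, Finset.prod_congr rfl e2, Finset.prod_const,
        Finset.prod_const, one_pow, mul_one]
      have : (Finset.univ.filter (· ∈ A)).card = A.card := by
        congr 1; ext i; simp
      rw [this, hodd.neg_one_pow]
    have hMm : -m ≤ M := by
      apply Finset.le_inf'
      intro i _
      by_cases hi : i ∈ A
      · have := h1 i hi; rcases abs_cases (x i) with ⟨e, _⟩ | ⟨e, _⟩ <;> omega
      · have := h2 i hi; rcases abs_cases (x i) with ⟨e, _⟩ | ⟨e, _⟩ <;> omega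
    rw [hP]; omega

/-- Density evolution identity for the min-sum check node
update, negative values: let `X₁, …, Xₙ` be i.i.d. integer-valued random
variables and let `m ≤ -1` be an integer. Then the probability that the
min-sum check node output `(∏ᵢ sign(Xᵢ)) · minᵢ |Xᵢ|` is at most `m` equals
`∑_{k odd, 0 ≤ k ≤ n} C(n,k) · P(X₁ ≤ m)^k · P(X₁ ≥ -m)^{n-k}`. -/
theorem de_check_node_neg {Ω : Type*} [MeasurableSpace Ω]
    (μ : Measure Ω) [IsProbabilityMeasure μ]
    (n : ℕ) (hn : 0 < n) (X : Fin n → Ω → ℤ)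
    (hmeas : ∀ i, Measurable (X i))
    (hindep : iIndepFun X μ)
    (hident : ∀ i, IdentDistrib (X i) (X ⟨0, hn⟩) μ μ)
    (m : ℤ) (hm : m ≤ -1) :
    μ {ω | (∏ i, Int.sign (X i ω)) *
        Finset.univ.inf' ⟨⟨0, hn⟩, Finset.mem_univ _⟩ (fun i => |X i ω|) ≤ m}
      = ∑ k ∈ (Finset.range (n + 1)).filter (fun k => Odd k),
          (n.choose k : ℝ≥0∞) * μ {ω | X ⟨0, hn⟩ ω ≤ m} ^ k *
            μ {ω | -m ≤ X ⟨0, hn⟩ ω} ^ (n - k) := by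
  classical
  set p := μ {ω | X ⟨0, hn⟩ ω ≤ m} with hp
  set q := μ {ω | -m ≤ X ⟨0, hn⟩ ω} with hq
  set T : Finset (Fin n) → Fin n → Set Ω := fun A i =>
    if i ∈ A then X i ⁻¹' (Set.Iic m) else X i ⁻¹' (Set.Ici (-m)) with hT
  set S : Finset (Finset (Fin n)) :=
    Finset.univ.powerset.filter (fun A => Odd A.card) with hS
  -- the event as a finite disjoint union
  have hset : {ω | (∏ i, Int.sign (X i ω)) *
      Finset.univ.inf' ⟨⟨0, hn⟩, Finset.mem_univ _⟩ (fun i => |X i ω|) ≤ m}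
      = ⋃ A ∈ S, ⋂ i, T A i := by
    ext ω
    simp only [Set.mem_setOf_eq, de_key hn (fun i => X i ω) m hm, Set.mem_iUnion,
      Set.mem_iInter, hS, Finset.mem_filter, Finset.mem_powerset, hT]
    constructor
    · rintro ⟨A, hodd, h1, h2⟩
      refine ⟨A, ⟨Finset.subset_univ _, hodd⟩, fun i => ?_⟩
      by_cases hi : i ∈ A
      · simp [hi, h1 i hi]
      · simp [hi, h2 i hi]
    · rintro ⟨A, ⟨-, hodd⟩, h⟩
      refine ⟨A, hodd, fun i hi => ?_, fun i hi => ?_⟩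
      · have := h i; simpa [hi] using this
      · have := h i; simpa [hi] using this
  rw [hset]
  have hmeasT : ∀ A i, MeasurableSet (T A i) := by
    intro A i
    by_cases hi : i ∈ A
    · simpa [hT, hi] using (hmeas i) measurableSet_Iic
    · simpa [hT, hi] using (hmeas i) measurableSet_Ici
  have hdisj : (↑S : Set (Finset (Fin n))).PairwiseDisjoint (fun A => ⋂ i, T A i) := by
    intro A hA B hB hAB
    rw [Function.onFun, Set.disjoint_left]
    intro ω hωA hωB
    obtain ⟨i, hi⟩ : ∃ i, (i ∈ A ∧ i ∉ B) ∨ (i ∈ B ∧ i ∉ A) := by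
      by_contra hc
      push_neg at hc
      exact hAB (Finset.ext fun i => by have := hc i; tauto)
    have hA' := Set.mem_iInter.1 hωA i
    have hB' := Set.mem_iInter.1 hωB i
    rcases hi with ⟨h1, h2⟩ | ⟨h1, h2⟩
    · simp only [hT, h1, h2, if_pos, if_neg, if_true, if_false, Set.mem_preimage,
        Set.mem_Iic, Set.mem_Ici] at hA' hB'
      omega
    · simp only [hT, h1, h2, if_pos, if_neg, if_true, if_false, Set.mem_preimage,
        Set.mem_Iic, Set.mem_Ici] at hA' hB'
      omega
  rw [measure_biUnion_finset hdisj (fun A _ => MeasurableSet.iInter (hmeasT A))]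
  -- measure of each piece
  have hpiece : ∀ A : Finset (Fin n), μ (⋂ i, T A i) = p ^ A.card * q ^ (n - A.card) := by
    intro A
    rw [hindep.meas_iInter (fun i => ?_)]
    swap
    · by_cases hi : i ∈ A
      · exact ⟨Set.Iic m, measurableSet_Iic, by simp [hT, hi]⟩
      · exact ⟨Set.Ici (-m), measurableSet_Ici, by simp [hT, hi]⟩
    have hTA : ∀ i, μ (T A i) = if i ∈ A then p else q := by
      intro i
      by_cases hi : i ∈ A
      · simp only [hT, hi, if_true]
        have := (hident i).measure_mem_eq (s := Set.Iic m) measurableSet_Iic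
        simpa [Set.preimage, Set.mem_Iic, hp] using this
      · simp only [hT, hi, if_false]
        have := (hident i).measure_mem_eq (s := Set.Ici (-m)) measurableSet_Ici
        simpa [Set.preimage, Set.mem_Ici, hq] using this
    calc ∏ i, μ (T A i) = ∏ i, (if i ∈ A then p else q) := by
          exact Finset.prod_congr rfl (fun i _ => hTA i)
      _ = p ^ A.card * q ^ (n - A.card) := by
          rw [Finset.prod_ite, Finset.prod_const, Finset.prod_const]
          congr 2
          · simp [Finset.filter_mem_eq_inter]
          · have : Finset.univ.filter (fun x => x ∉ A) = Finset.univ \ A := by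
              ext i; simp
            rw [this, Finset.card_univ_diff, Fintype.card_fin]
  calc ∑ A ∈ S, μ (⋂ i, T A i) = ∑ A ∈ S, p ^ A.card * q ^ (n - A.card) :=
        Finset.sum_congr rfl (fun A _ => hpiece A)
    _ = ∑ A ∈ Finset.univ.powerset,
          (if Odd A.card then p ^ A.card * q ^ (n - A.card) else 0) := by
        rw [hS, Finset.sum_filter]
    _ = ∑ k ∈ Finset.range (n + 1), ∑ A ∈ Finset.powersetCard k (Finset.univ : Finset (Fin n)),
          (if Odd A.card then p ^ A.card * q ^ (n - A.card) else 0) := by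
        rw [Finset.sum_powerset]
        simp
    _ = ∑ k ∈ Finset.range (n + 1),
          (n.choose k : ℝ≥0∞) * (if Odd k then p ^ k * q ^ (n - k) else 0) := by
        refine Finset.sum_congr rfl (fun k _ => ?_)
        rw [Finset.sum_congr rfl (fun A hA => ?_), Finset.sum_const, Finset.card_powersetCard,
          Finset.card_univ, Fintype.card_fin, nsmul_eq_mul]
        rw [(Finset.mem_powersetCard.1 hA).2]
    _ = ∑ k ∈ (Finset.range (n + 1)).filter (fun k => Odd k),
          (n.choose k : ℝ≥0∞) * p ^ k * q ^ (n - k) := by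
        rw [Finset.sum_filter]
        refine Finset.sum_congr rfl (fun k _ => ?_)
        split_ifs <;> simp [mul_assoc]
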